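/- Let N be odd with N ≥ 3, let θ_1 < θ_2 < ... < θ_N be real numbers, let m = (N+1)/2, and let p be an index with p < m. Let V = {1,...,N} \ {p, p+1}. Then the number of voters j ∈ V with (θ_j − θ_{p+1})² < (θ_j − θ_p)² is strictly greater than the number of voters j ∈ V with (θ_j − θ_p)² < (θ_j − θ_{p+1})². That is, if a proposer p strictly left of the median proposes their peak θ_p and agent p+1 deviates by proposing θ_{p+1}, then θ_{p+1} wins the pairwise majority vote among the remaining agents. -/
import Mathlib


/-- Deviation argument in Proposition 1. Let `N ≥ 3` be odd with strictly ordered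
types, `m` the median index (`2 * m + 1 = N`), `p < m` a proposer strictly left of
the median, and `q` the next agent (`q = p + 1`). Among the voters
`V = univ \ {p, q}`, strictly more voters strictly prefer `θ q` to `θ p` than the
other way around: the deviating proposal `θ q` wins the pairwise majority vote
against `θ p`. -/
theorem stmt12 (N : ℕ) (hN3 : 3 ≤ N) (hN : Odd N) (θ : Fin N → ℝ) (hθ : StrictMono θ)
    (m : Fin N) (hm : 2 * (m : ℕ) + 1 = N)
    (p q : Fin N) (hp : p < m) (hq : (q : ℕ) = (p : ℕ) + 1) :
    ((Finset.univ \ {p, q}).filter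
        (fun j : Fin N => (θ j - θ p) ^ 2 < (θ j - θ q) ^ 2)).card <
    ((Finset.univ \ {p, q}).filter
        (fun j : Fin N => (θ j - θ q) ^ 2 < (θ j - θ p) ^ 2)).card := by
  have hpq : p < q := by
    rw [Fin.lt_iff_val_lt_val]; omega
  have hθpq : θ p < θ q := hθ hpq
  have hA : ((Finset.univ \ {p, q}).filter
      (fun j : Fin N => (θ j - θ p) ^ 2 < (θ j - θ q) ^ 2)) = Finset.Iio p := by
    ext j
    simp only [Finset.mem_filter, Finset.mem_sdiff, Finset.mem_univ, true_and,
      Finset.mem_insert, Finset.mem_singleton, Finset.mem_Iio, not_or]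
    constructor
    · rintro ⟨⟨hjp, hjq⟩, hlt⟩
      by_contra hnot
      have hjq' : q < j := by
        rw [Fin.lt_iff_val_lt_val]
        have h1 : j ≠ p := hjp
        have h2 : j ≠ q := hjq
        have : (j : ℕ) ≠ (p : ℕ) := fun h => h1 (Fin.ext h)
        have : (j : ℕ) ≠ (q : ℕ) := fun h => h2 (Fin.ext h)
        simp only [Fin.lt_iff_val_lt_val, not_lt] at hnot
        omega
      have := hθ hjq'
      nlinarith
    · intro hjp
      have h1 : θ j < θ p := hθ hjp
      refine ⟨⟨Fin.ne_of_lt hjp, Fin.ne_of_lt (hjp.trans hpq)⟩, by nlinarith⟩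
  have hB : ((Finset.univ \ {p, q}).filter
      (fun j : Fin N => (θ j - θ q) ^ 2 < (θ j - θ p) ^ 2)) = Finset.Ioi q := by
    ext j
    simp only [Finset.mem_filter, Finset.mem_sdiff, Finset.mem_univ, true_and,
      Finset.mem_insert, Finset.mem_singleton, Finset.mem_Ioi, not_or]
    constructor
    · rintro ⟨⟨hjp, hjq⟩, hlt⟩
      by_contra hnot
      have hjp' : j < p := by
        rw [Fin.lt_iff_val_lt_val]
        have : (j : ℕ) ≠ (p : ℕ) := fun h => hjp (Fin.ext h)
        have : (j : ℕ) ≠ (q : ℕ) := fun h => hjq (Fin.ext h)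
        simp only [Fin.lt_iff_val_lt_val, not_lt] at hnot
        omega
      have := hθ hjp'
      nlinarith
    · intro hjq
      have h1 : θ q < θ j := hθ hjq
      refine ⟨⟨Fin.ne_of_gt (hpq.trans hjq), Fin.ne_of_gt hjq⟩, by nlinarith⟩
  rw [hA, hB, Fin.card_Iio, Fin.card_Ioi]
  have := q.isLt
  have hpm : (p : ℕ) < (m : ℕ) := hp
  omega
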